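/- arXiv:2308.06090 — 3 statements merged into one kernel-verified Lean document; each statement's English description precedes it below -/
import Mathlib

section
/- Let Ψ¹,…,Ψ^M be linearly independent vectors in a complex Hilbert space Z such that the matrix 𝓔 = (ε_{ij}) defined by ⟨Ψ^i,Ψ^j⟩ = δ_{ij} + ε_{ij} satisfies ‖𝓔‖₁ < 1. For 2 ≤ i ≤ M let A_{i−1} be the (i−1)×(i−1) Gram matrix with entries (A_{i−1})_{jk} = ⟨Ψ^j,Ψ^k⟩; then each A_{i−1} is invertible, and the M×M matrix B̃ = (b̃_{ij}) defined by b̃_{ij} := Σ_{k=1}^{i−1} (A_{i−1}^{-1})_{jk} ε_{ki} for 2 ≤ i ≤ M and 1 ≤ j ≤ i−1, and b̃_{ij} := 0 otherwise, satisfies ‖B̃‖_∞ ≤ ‖𝓔‖₁ (1 − ‖𝓔‖₁)^{-1}. -/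
open scoped InnerProductSpace

/-- Maximum absolute column sum norm of a matrix. -/
noncomputable def matNorm1 {M : ℕ} {𝕜 : Type*} [NormedField 𝕜]
    (A : Matrix (Fin M) (Fin M) 𝕜) : ℝ :=
  ⨆ j, ∑ i, ‖A i j‖

/-- Maximum absolute row sum norm of a matrix. -/
noncomputable def matNormInf {M : ℕ} {𝕜 : Type*} [NormedField 𝕜]
    (A : Matrix (Fin M) (Fin M) 𝕜) : ℝ :=
  ⨆ i, ∑ j, ‖A i j‖

/-- The Gram matrix of the first `i` vectors of `Ψ`. -/
noncomputable def gram {Z : Type*} [NormedAddCommGroup Z] [InnerProductSpace ℂ Z]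
    {M : ℕ} (Ψ : Fin M → Z) (i : Fin M) : Matrix (Fin i.val) (Fin i.val) ℂ :=
  fun j k => ⟪Ψ (Fin.castLE i.isLt.le j), Ψ (Fin.castLE i.isLt.le k)⟫_ℂ

attribute [local instance]
  Matrix.linftyOpNormedAddCommGroup
  Matrix.linftyOpNormedRing

open scoped NNReal Matrix

section helpers

variable {m' n' : Type*} [Fintype m'] [Fintype n']

private lemma linftyNormLe (A : Matrix m' n' ℂ) {q : ℝ}
    (hq0 : 0 ≤ q) (h : ∀ i, ∑ j, ‖A i j‖ ≤ q) : ‖A‖ ≤ q := by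
  rw [Matrix.linfty_opNorm_def]
  rcases isEmpty_or_nonempty m' with hm | hm
  · simpa using hq0
  · obtain ⟨i0, -, hs⟩ := Finset.exists_mem_eq_sup Finset.univ Finset.univ_nonempty
      (fun i => ∑ j, ‖A i j‖₊)
    rw [hs]
    calc ((∑ j, ‖A i0 j‖₊ : ℝ≥0) : ℝ) = ∑ j, ‖A i0 j‖ := by
          simp [NNReal.coe_sum]
      _ ≤ q := h i0

private lemma rowSumLe (A : Matrix m' n' ℂ) (i : m') : ∑ j, ‖A i j‖ ≤ ‖A‖ := by
  rw [Matrix.linfty_opNorm_def]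
  have h := Finset.le_sup (f := fun i => ∑ j, ‖A i j‖₊) (Finset.mem_univ i)
  calc ∑ j, ‖A i j‖ = ((∑ j, ‖A i j‖₊ : ℝ≥0) : ℝ) := by simp [NNReal.coe_sum]
    _ ≤ _ := NNReal.coe_le_coe.mpr h

private lemma normOneLe (n : ℕ) : ‖(1 : Matrix (Fin n) (Fin n) ℂ)‖ ≤ 1 := by
  apply linftyNormLe _ zero_le_one
  intro i
  simp [Matrix.one_apply, apply_ite (norm : ℂ → ℝ)]

private local instance matComplete (n : ℕ) : CompleteSpace (Matrix (Fin n) (Fin n) ℂ) :=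
  letI := (Matrix.linftyOpNormedSpace : NormedSpace ℂ (Matrix (Fin n) (Fin n) ℂ))
  FiniteDimensional.complete ℂ _

private lemma invBound {n : ℕ} (E : Matrix (Fin n) (Fin n) ℂ) {q : ℝ} (hq : ‖E‖ ≤ q)
    (hq1 : q < 1) : IsUnit (1 + E) ∧ ‖(1 + E)⁻¹‖ ≤ (1 - q)⁻¹ := by
  have h1 : ‖-E‖ < 1 := by rw [norm_neg]; exact lt_of_le_of_lt hq hq1
  have hu : IsUnit (1 + E) := by
    have := @isUnit_one_sub_of_norm_lt_one _ _ (@instHasSummableGeomSeriesOfCompleteSpace _ _ (matComplete n)) _ h1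
    rwa [sub_neg_eq_add] at this
  refine ⟨hu, ?_⟩
  set m := (1 + E)⁻¹ with hmdef
  have hm : (1 + E) * m = 1 :=
    Matrix.mul_nonsing_inv _ ((Matrix.isUnit_iff_isUnit_det _).mp hu)
  have hm2 : m = 1 - E * m := by
    have h' : m + E * m = 1 := by rw [← hm]; noncomm_ring
    linear_combination (norm := noncomm_ring) h'
  have key : ‖m‖ ≤ 1 + q * ‖m‖ := by
    calc ‖m‖ = ‖1 - E * m‖ := by rw [← hm2]
      _ ≤ ‖(1 : Matrix (Fin n) (Fin n) ℂ)‖ + ‖E * m‖ := norm_sub_le _ _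
      _ ≤ 1 + q * ‖m‖ := by
          refine add_le_add (normOneLe n) ?_
          exact le_trans (Matrix.linfty_opNorm_mul E m)
            (mul_le_mul_of_nonneg_right hq (norm_nonneg _))
  rw [inv_eq_one_div, le_div_iff₀ (by linarith)]
  nlinarith [norm_nonneg m]

private lemma sumDiteFin {M n : ℕ} (hn : n ≤ M) (f : Fin n → ℝ) :
    ∑ j : Fin M, (if h : (j : ℕ) < n then f ⟨j, h⟩ else 0) = ∑ j : Fin n, f j := by
  classical
  set G : ℕ → ℝ := fun j => if h : j < n then f ⟨j, h⟩ else 0 with hG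
  have h1 : ∑ j : Fin M, (if h : (j : ℕ) < n then f ⟨j, h⟩ else 0)
      = ∑ j ∈ Finset.range M, G j := Fin.sum_univ_eq_sum_range G M
  have h2 : ∑ j : Fin n, f j = ∑ j ∈ Finset.range n, G j := by
    rw [← Fin.sum_univ_eq_sum_range G n]
    exact Finset.sum_congr rfl fun j _ => by simp [hG, j.isLt]
  rw [h1, h2]
  symm
  apply Finset.sum_subset (Finset.range_subset_range.mpr hn)
  intro x _ hx
  simp only [Finset.mem_range, not_lt] at hx
  exact dif_neg (by omega)

end helpers

theorem stmt4 {Z : Type*} [NormedAddCommGroup Z] [InnerProductSpace ℂ Z] [CompleteSpace Z]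
    {M : ℕ} (Ψ : Fin M → Z) (hΨ : LinearIndependent ℂ Ψ)
    (ε : Matrix (Fin M) (Fin M) ℂ)
    (hε : ∀ i j, (⟪Ψ i, Ψ j⟫_ℂ) = (if i = j then 1 else 0) + ε i j)
    (hsmall : matNorm1 ε < 1)
    (B : Matrix (Fin M) (Fin M) ℂ)
    (hB : ∀ i j : Fin M, B i j =
      if h : (j : ℕ) < (i : ℕ) then
        ∑ k : Fin i.val, (gram Ψ i)⁻¹ ⟨(j : ℕ), h⟩ k * ε (Fin.castLE i.isLt.le k) i
      else 0) :
    (∀ i : Fin M, IsUnit (gram Ψ i)) ∧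
    matNormInf B ≤ matNorm1 ε * (1 - matNorm1 ε)⁻¹ := by
  classical
  set q := matNorm1 ε with hqdef
  have hq1 : q < 1 := hsmall
  have hq0 : 0 ≤ q := by
    rw [hqdef, matNorm1]
    exact Real.iSup_nonneg fun j => Finset.sum_nonneg fun i _ => norm_nonneg _
  have hinvq0 : (0:ℝ) ≤ (1 - q)⁻¹ := inv_nonneg.mpr (by linarith)
  have hcol : ∀ j : Fin M, ∑ i, ‖ε i j‖ ≤ q := by
    intro j
    rw [hqdef, matNorm1]
    exact le_ciSup (f := fun j : Fin M => ∑ i, ‖ε i j‖) (Set.Finite.bddAbove (Set.finite_range _)) j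
  have hsubcol : ∀ (i : Fin M) (c : Fin M),
      ∑ j : Fin i.val, ‖ε (Fin.castLE i.isLt.le j) c‖ ≤ q := by
    intro i c
    refine le_trans ?_ (hcol c)
    have heq : ∑ j : Fin i.val, ‖ε (Fin.castLE i.isLt.le j) c‖
        = ∑ x ∈ Finset.univ.map (Fin.castLEOrderEmb i.isLt.le).toEmbedding, ‖ε x c‖ := by
      rw [Finset.sum_map]; rfl
    rw [heq]
    exact Finset.sum_le_univ_sum_of_nonneg fun x => norm_nonneg _
  have main : ∀ i : Fin M, IsUnit (gram Ψ i) ∧ ∀ k : Fin i.val,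
      ∑ j : Fin i.val, ‖(gram Ψ i)⁻¹ j k‖ ≤ (1 - q)⁻¹ := by
    intro i
    set E : Matrix (Fin i.val) (Fin i.val) ℂ :=
      fun j k => ε (Fin.castLE i.isLt.le j) (Fin.castLE i.isLt.le k) with hE
    have hgram : gram Ψ i = 1 + E := by
      ext j k
      simp [gram, hε, Matrix.add_apply, Matrix.one_apply, Fin.castLE_inj, hE]
      rfl
    have htrans : (gram Ψ i)ᵀ = 1 + Eᵀ := by
      rw [hgram, Matrix.transpose_add, Matrix.transpose_one]
    have hEt : ‖Eᵀ‖ ≤ q := by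
      refine linftyNormLe _ hq0 fun k => ?_
      exact hsubcol i (Fin.castLE i.isLt.le k)
    have hinv := invBound Eᵀ hEt hq1
    have hunit : IsUnit (gram Ψ i) := by
      rw [Matrix.isUnit_iff_isUnit_det, ← Matrix.det_transpose, htrans]
      exact (Matrix.isUnit_iff_isUnit_det _).mp hinv.1
    refine ⟨hunit, fun k => ?_⟩
    have h1 : ∑ j : Fin i.val, ‖(gram Ψ i)⁻¹ j k‖
        = ∑ j : Fin i.val, ‖((gram Ψ i)ᵀ)⁻¹ k j‖ := by
      simp [← Matrix.transpose_nonsing_inv, Matrix.transpose_apply]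
    calc ∑ j : Fin i.val, ‖(gram Ψ i)⁻¹ j k‖
        = ∑ j : Fin i.val, ‖((gram Ψ i)ᵀ)⁻¹ k j‖ := h1
      _ ≤ ‖((gram Ψ i)ᵀ)⁻¹‖ := rowSumLe _ k
      _ = ‖(1 + Eᵀ)⁻¹‖ := by rw [htrans]
      _ ≤ (1 - q)⁻¹ := hinv.2
  refine ⟨fun i => (main i).1, ?_⟩
  rw [matNormInf]
  refine Real.iSup_le (fun i => ?_) (mul_nonneg hq0 hinvq0)
  calc ∑ j : Fin M, ‖B i j‖
      = ∑ j : Fin M, (if h : (j : ℕ) < (i : ℕ) then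
          ‖∑ k : Fin i.val, (gram Ψ i)⁻¹ ⟨(j : ℕ), h⟩ k * ε (Fin.castLE i.isLt.le k) i‖
          else 0) := by
        refine Finset.sum_congr rfl fun j _ => ?_
        rw [hB i j]
        by_cases h : (j : ℕ) < (i : ℕ)
        · rw [dif_pos h, dif_pos h]
        · rw [dif_neg h, dif_neg h, norm_zero]
    _ ≤ ∑ j : Fin M, (if h : (j : ℕ) < (i : ℕ) then
          ∑ k : Fin i.val, ‖(gram Ψ i)⁻¹ ⟨(j : ℕ), h⟩ k‖ * ‖ε (Fin.castLE i.isLt.le k) i‖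
          else 0) := by
        refine Finset.sum_le_sum fun j _ => ?_
        by_cases h : (j : ℕ) < (i : ℕ)
        · rw [dif_pos h, dif_pos h]
          refine le_trans (norm_sum_le _ _) (Finset.sum_le_sum fun k _ => ?_)
          rw [norm_mul]
        · rw [dif_neg h, dif_neg h]
    _ = ∑ j : Fin M, ∑ k : Fin i.val, (if h : (j : ℕ) < (i : ℕ) then
          ‖(gram Ψ i)⁻¹ ⟨(j : ℕ), h⟩ k‖ * ‖ε (Fin.castLE i.isLt.le k) i‖ else 0) := by
        refine Finset.sum_congr rfl fun j _ => ?_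
        by_cases h : (j : ℕ) < (i : ℕ)
        · simp only [dif_pos h]
        · simp only [dif_neg h, Finset.sum_const_zero]
    _ = ∑ k : Fin i.val, ∑ j : Fin M, (if h : (j : ℕ) < (i : ℕ) then
          ‖(gram Ψ i)⁻¹ ⟨(j : ℕ), h⟩ k‖ * ‖ε (Fin.castLE i.isLt.le k) i‖ else 0) :=
        Finset.sum_comm
    _ = ∑ k : Fin i.val,
          ∑ j : Fin i.val, ‖(gram Ψ i)⁻¹ j k‖ * ‖ε (Fin.castLE i.isLt.le k) i‖ := by
        refine Finset.sum_congr rfl fun k _ => ?_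
        exact sumDiteFin i.isLt.le
          (fun j => ‖(gram Ψ i)⁻¹ j k‖ * ‖ε (Fin.castLE i.isLt.le k) i‖)
    _ = ∑ k : Fin i.val,
          (∑ j : Fin i.val, ‖(gram Ψ i)⁻¹ j k‖) * ‖ε (Fin.castLE i.isLt.le k) i‖ := by
        refine Finset.sum_congr rfl fun k _ => ?_
        rw [Finset.sum_mul]
    _ ≤ ∑ k : Fin i.val, (1 - q)⁻¹ * ‖ε (Fin.castLE i.isLt.le k) i‖ :=
        Finset.sum_le_sum fun k _ =>
          mul_le_mul_of_nonneg_right ((main i).2 k) (norm_nonneg _)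
    _ = (1 - q)⁻¹ * ∑ k : Fin i.val, ‖ε (Fin.castLE i.isLt.le k) i‖ := by
        rw [Finset.mul_sum]
    _ ≤ (1 - q)⁻¹ * q := mul_le_mul_of_nonneg_left (hsubcol i i) hinvq0
    _ = q * (1 - q)⁻¹ := mul_comm _ _
end

section
/- Let Ψ¹,…,Ψ^M be linearly independent vectors in a complex Hilbert space Z such that the matrix 𝓔 = (ε_{ij}) defined by ⟨Ψ^i,Ψ^j⟩ = δ_{ij} + ε_{ij} satisfies ‖𝓔‖₁ < 1, and set ε_max := max_{1≤i≤M}|ε_{ii}|. Define Ψ̃¹ := Ψ¹ and, for 2 ≤ i ≤ M, Ψ̃^i := Ψ^i − Σ_{1≤j,k≤i−1} (A_{i−1}^{-1})_{jk} ⟨Ψ^k,Ψ^i⟩ Ψ^j, where A_{i−1} is the (i−1)×(i−1) Gram matrix with entries (A_{i−1})_{jk} = ⟨Ψ^j,Ψ^k⟩. Then for every 1 ≤ i ≤ M, ‖Ψ̃^i − Ψ^i‖ ≤ (1 + ε_max) ‖𝓔‖₁ (1 − ‖𝓔‖₁)^{-1}. -/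
open scoped InnerProductSpace
open scoped Matrix

/-- The Gram–Schmidt step: `Ψ i` minus its orthogonal projection onto the span of the
previous vectors, written via the inverse Gram matrix. -/
noncomputable def tildePsi {Z : Type*} [NormedAddCommGroup Z] [InnerProductSpace ℂ Z]
    {M : ℕ} (Ψ : Fin M → Z) (i : Fin M) : Z :=
  Ψ i - ∑ j : Fin i.val, ∑ k : Fin i.val,
    ((gram Ψ i)⁻¹ j k * ⟪Ψ (Fin.castLE i.isLt.le k), Ψ i⟫_ℂ) • Ψ (Fin.castLE i.isLt.le j)

section Aux

attribute [local instance] Matrix.linftyOpNormedAddCommGroup Matrix.linftyOpNormedRing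

lemma myComplete (n : ℕ) : @CompleteSpace (Matrix (Fin n) (Fin n) ℂ)
    (Matrix.linftyOpNormedRing (n := Fin n) (α := ℂ)).toUniformSpace :=
  letI : NormedSpace ℂ (Matrix (Fin n) (Fin n) ℂ) := Matrix.linftyOpNormedSpace
  FiniteDimensional.complete ℂ _

attribute [local instance] myComplete

/-- Each row sum is at most the `L∞`-operator norm. -/
lemma rowsum_le {m n : Type*} [Fintype m] [Fintype n] (B : Matrix m n ℂ) (i : m) :
    ∑ j, ‖B i j‖ ≤ ‖B‖ := by
  rw [Matrix.linfty_opNorm_def]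
  have h : (∑ j, ‖B i j‖₊) ≤ Finset.univ.sup fun i => ∑ j, ‖B i j‖₊ :=
    Finset.le_sup (f := fun i => ∑ j, ‖B i j‖₊) (Finset.mem_univ i)
  calc ∑ j, ‖B i j‖ = ((∑ j, ‖B i j‖₊ : NNReal) : ℝ) := by push_cast; rfl
    _ ≤ _ := NNReal.coe_le_coe.mpr h

lemma norm_le_of_rowsums {m n : Type*} [Fintype m] [Fintype n] (B : Matrix m n ℂ) {c : ℝ}
    (hc : 0 ≤ c) (h : ∀ i, ∑ j, ‖B i j‖ ≤ c) : ‖B‖ ≤ c := by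
  rw [Matrix.linfty_opNorm_def]
  rw [← Real.coe_toNNReal c hc, NNReal.coe_le_coe]
  refine Finset.sup_le fun i _ => ?_
  rw [Real.le_toNNReal_iff_coe_le hc]
  calc ((∑ j, ‖B i j‖₊ : NNReal) : ℝ) = ∑ j, ‖B i j‖ := by push_cast; rfl
    _ ≤ c := h i

lemma norm_ringInverse_one_sub_le {n : ℕ} [Nonempty (Fin n)]
    {x : Matrix (Fin n) (Fin n) ℂ} (h : ‖x‖ < 1) :
    ‖Ring.inverse (1 - x)‖ ≤ (1 - ‖x‖)⁻¹ := by
  rw [← geom_series_eq_inverse x h]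
  have hs : HasSum (fun k : ℕ => ‖x‖ ^ k) (1 - ‖x‖)⁻¹ :=
    hasSum_geometric_of_lt_one (norm_nonneg x) h
  refine tsum_of_norm_bounded hs fun k => ?_
  cases k with
  | zero => simp
  | succ k => exact norm_pow_le' x k.succ_pos

/-- Column sums of the inverse of a small perturbation of the identity. -/
lemma colsum_inv_le {n : ℕ} (E : Matrix (Fin n) (Fin n) ℂ) {c : ℝ}
    (hE : ∀ k, ∑ j, ‖E j k‖ ≤ c) (h1 : c < 1) (k : Fin n) :
    ∑ j, ‖(1 + E)⁻¹ j k‖ ≤ (1 - c)⁻¹ := by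
  haveI : Nonempty (Fin n) := ⟨k⟩
  have hc : 0 ≤ c := le_trans (Finset.sum_nonneg fun _ _ => norm_nonneg _) (hE k)
  have ht : ‖Eᵀ‖ ≤ c := norm_le_of_rowsums _ hc fun i => by
    simpa [Matrix.transpose_apply] using hE i
  have hEt : ‖(-(Eᵀ))‖ < 1 := by rw [norm_neg]; exact lt_of_le_of_lt ht h1
  have hAt : (1 + E)ᵀ = 1 - -Eᵀ := by
    rw [Matrix.transpose_add, Matrix.transpose_one, sub_neg_eq_add]
  calc ∑ j, ‖(1 + E)⁻¹ j k‖ = ∑ j, ‖((1 + E)ᵀ)⁻¹ k j‖ := by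
        rw [← Matrix.transpose_nonsing_inv]; simp [Matrix.transpose_apply]
    _ ≤ ‖((1 + E)ᵀ)⁻¹‖ := rowsum_le _ k
    _ = ‖Ring.inverse (1 - -Eᵀ)‖ := by rw [hAt, Matrix.nonsing_inv_eq_ringInverse]
    _ ≤ (1 - ‖(-(Eᵀ))‖)⁻¹ := norm_ringInverse_one_sub_le hEt
    _ ≤ (1 - c)⁻¹ := by
        refine inv_anti₀ (by linarith) ?_
        rw [norm_neg]; linarith

end Aux

theorem stmt5 {Z : Type*} [NormedAddCommGroup Z] [InnerProductSpace ℂ Z] [CompleteSpace Z]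
    {M : ℕ} (hM : 0 < M) (Ψ : Fin M → Z) (hΨ : LinearIndependent ℂ Ψ)
    (ε : Matrix (Fin M) (Fin M) ℂ)
    (hε : ∀ i j, (⟪Ψ i, Ψ j⟫_ℂ) = (if i = j then 1 else 0) + ε i j)
    (hsmall : matNorm1 ε < 1)
    (εmax : ℝ) (hεmax : εmax = ⨆ i, ‖ε i i‖) :
    ∀ i : Fin M, ‖tildePsi Ψ i - Ψ i‖ ≤ (1 + εmax) * matNorm1 ε * (1 - matNorm1 ε)⁻¹ := by
  intro i
  classical
  have hbdd : ∀ f : Fin M → ℝ, BddAbove (Set.range f) := fun f =>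
    Set.Finite.bddAbove (Set.finite_range f)
  have hm0 : 0 ≤ matNorm1 ε :=
    Real.iSup_nonneg fun j => Finset.sum_nonneg fun _ _ => norm_nonneg _
  have hemax0 : 0 ≤ εmax := hεmax ▸ Real.iSup_nonneg fun _ => norm_nonneg _
  have hemaxle : ∀ v : Fin M, ‖ε v v‖ ≤ εmax := fun v => hεmax ▸ le_ciSup (f := fun v => ‖ε v v‖) (hbdd _) v
  have hcol : ∀ j : Fin M, (∑ v, ‖ε v j‖) ≤ matNorm1 ε := fun j =>
    le_ciSup (hbdd fun j => ∑ v, ‖ε v j‖) j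
  have hinv0 : 0 ≤ (1 - matNorm1 ε)⁻¹ := inv_nonneg.mpr (by linarith)
  -- norms of the Ψ's
  have hΨnorm : ∀ v : Fin M, ‖Ψ v‖ ≤ 1 + εmax := by
    intro v
    have h1 : (⟪Ψ v, Ψ v⟫_ℂ) = 1 + ε v v := by rw [hε]; simp
    have h2 : ‖Ψ v‖ * ‖Ψ v‖ ≤ 1 + εmax := by
      rw [← inner_self_eq_norm_mul_norm (𝕜 := ℂ), h1]
      have hre : RCLike.re (ε v v) ≤ ‖ε v v‖ := RCLike.re_le_norm _
      have h3 := hemaxle v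
      simp only [map_add]
      simp only [RCLike.one_re]
      linarith
    nlinarith [norm_nonneg (Ψ v), sq_nonneg (‖Ψ v‖ - 1)]
  -- notation
  set cst : Fin i.val → Fin M := Fin.castLE i.isLt.le with hc
  have hne : ∀ k : Fin i.val, cst k ≠ i := by
    intro k h
    have h' : (k : ℕ) = (i : ℕ) := congrArg Fin.val h
    have := k.isLt
    omega
  have hb : ∀ k : Fin i.val, (⟪Ψ (cst k), Ψ i⟫_ℂ) = ε (cst k) i := by
    intro k; rw [hε]; simp [hne k]
  -- sums over columns restricted to the first i.val entries
  have hsub : ∀ v : Fin M, (∑ j : Fin i.val, ‖ε (cst j) v‖) ≤ matNorm1 ε := by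
    intro v
    calc (∑ j : Fin i.val, ‖ε (cst j) v‖)
        = ∑ w ∈ Finset.univ.image cst, ‖ε w v‖ :=
          (Finset.sum_image (g := cst) (f := fun w => ‖ε w v‖)
            (fun a _ b _ h => Fin.castLE_injective _ h)).symm
      _ ≤ ∑ w : Fin M, ‖ε w v‖ :=
          Finset.sum_le_sum_of_subset_of_nonneg (Finset.subset_univ _)
            (fun _ _ _ => norm_nonneg _)
      _ ≤ matNorm1 ε := hcol v
  -- the Gram matrix is a perturbation of the identity
  have hgram : gram Ψ i = 1 + Matrix.of (fun j k : Fin i.val => ε (cst j) (cst k)) := by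
    ext j k
    show (⟪Ψ (cst j), Ψ (cst k)⟫_ℂ) = _
    rw [hε]
    simp [Matrix.one_apply, hc, Fin.castLE_inj]
  -- column sums of the inverse Gram matrix
  have key : ∀ k : Fin i.val, (∑ j, ‖(gram Ψ i)⁻¹ j k‖) ≤ (1 - matNorm1 ε)⁻¹ := by
    intro k
    rw [hgram]
    exact colsum_inv_le _ (fun k' => hsub (cst k')) hsmall k
  -- rewrite the difference
  have hdiff : tildePsi Ψ i - Ψ i =
      -(∑ j : Fin i.val,
        (∑ k : Fin i.val, (gram Ψ i)⁻¹ j k * ⟪Ψ (cst k), Ψ i⟫_ℂ) • Ψ (cst j)) := by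
    rw [tildePsi, sub_sub_cancel_left]
    congr 1
    exact Finset.sum_congr rfl fun j _ => (Finset.sum_smul).symm
  rw [hdiff, norm_neg]
  have hbsum : (∑ k : Fin i.val, ‖(⟪Ψ (cst k), Ψ i⟫_ℂ)‖) ≤ matNorm1 ε := by
    calc (∑ k : Fin i.val, ‖(⟪Ψ (cst k), Ψ i⟫_ℂ)‖)
        = ∑ k : Fin i.val, ‖ε (cst k) i‖ := by
          exact Finset.sum_congr rfl fun k _ => by rw [hb k]
      _ ≤ matNorm1 ε := hsub i
  have hsum : (∑ j : Fin i.val, ‖∑ k : Fin i.val, (gram Ψ i)⁻¹ j k * ⟪Ψ (cst k), Ψ i⟫_ℂ‖)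
      ≤ (1 - matNorm1 ε)⁻¹ * matNorm1 ε := by
    calc (∑ j : Fin i.val, ‖∑ k : Fin i.val, (gram Ψ i)⁻¹ j k * ⟪Ψ (cst k), Ψ i⟫_ℂ‖)
        ≤ ∑ j : Fin i.val, ∑ k : Fin i.val, ‖(gram Ψ i)⁻¹ j k‖ * ‖(⟪Ψ (cst k), Ψ i⟫_ℂ)‖ :=
          Finset.sum_le_sum fun j _ => (norm_sum_le _ _).trans_eq
            (Finset.sum_congr rfl fun k _ => norm_mul _ _)
      _ = ∑ k : Fin i.val, (∑ j : Fin i.val, ‖(gram Ψ i)⁻¹ j k‖) * ‖(⟪Ψ (cst k), Ψ i⟫_ℂ)‖ := by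
          rw [Finset.sum_comm]
          exact Finset.sum_congr rfl fun k _ => (Finset.sum_mul _ _ _).symm
      _ ≤ ∑ k : Fin i.val, (1 - matNorm1 ε)⁻¹ * ‖(⟪Ψ (cst k), Ψ i⟫_ℂ)‖ :=
          Finset.sum_le_sum fun k _ => mul_le_mul_of_nonneg_right (key k) (norm_nonneg _)
      _ = (1 - matNorm1 ε)⁻¹ * ∑ k : Fin i.val, ‖(⟪Ψ (cst k), Ψ i⟫_ℂ)‖ :=
          (Finset.mul_sum _ _ _).symm
      _ ≤ (1 - matNorm1 ε)⁻¹ * matNorm1 ε := mul_le_mul_of_nonneg_left hbsum hinv0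
  calc ‖∑ j : Fin i.val,
        (∑ k : Fin i.val, (gram Ψ i)⁻¹ j k * ⟪Ψ (cst k), Ψ i⟫_ℂ) • Ψ (cst j)‖
      ≤ ∑ j : Fin i.val,
        ‖(∑ k : Fin i.val, (gram Ψ i)⁻¹ j k * ⟪Ψ (cst k), Ψ i⟫_ℂ) • Ψ (cst j)‖ :=
        norm_sum_le _ _
    _ = ∑ j : Fin i.val,
        ‖∑ k : Fin i.val, (gram Ψ i)⁻¹ j k * ⟪Ψ (cst k), Ψ i⟫_ℂ‖ * ‖Ψ (cst j)‖ := by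
        simp [norm_smul]
    _ ≤ ∑ j : Fin i.val,
        ‖∑ k : Fin i.val, (gram Ψ i)⁻¹ j k * ⟪Ψ (cst k), Ψ i⟫_ℂ‖ * (1 + εmax) :=
        Finset.sum_le_sum fun j _ =>
          mul_le_mul_of_nonneg_left (hΨnorm _) (norm_nonneg _)
    _ = (∑ j : Fin i.val, ‖∑ k : Fin i.val, (gram Ψ i)⁻¹ j k * ⟪Ψ (cst k), Ψ i⟫_ℂ‖)
          * (1 + εmax) := (Finset.sum_mul _ _ _).symm
    _ ≤ ((1 - matNorm1 ε)⁻¹ * matNorm1 ε) * (1 + εmax) :=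
        mul_le_mul_of_nonneg_right hsum (by linarith)
    _ = (1 + εmax) * matNorm1 ε * (1 - matNorm1 ε)⁻¹ := by ring
end

section
/- Let Ψ¹,…,Ψ^M be linearly independent vectors in a complex Hilbert space Z such that the matrix 𝓔 = (ε_{ij}) defined by ⟨Ψ^i,Ψ^j⟩ = δ_{ij} + ε_{ij} satisfies 2‖𝓔‖₁ + ε_max < 1, where ε_max := max_{1≤i≤M}|ε_{ii}|. Define Ψ̃¹ := Ψ¹ and, for 2 ≤ i ≤ M, Ψ̃^i := Ψ^i − Σ_{1≤j,k≤i−1} (A_{i−1}^{-1})_{jk} ⟨Ψ^k,Ψ^i⟩ Ψ^j, where A_{i−1} is the (i−1)×(i−1) Gram matrix with entries (A_{i−1})_{jk} = ⟨Ψ^j,Ψ^k⟩. Then for every 1 ≤ i ≤ M, ‖Ψ̃^i‖ ≥ (1 − 2‖𝓔‖₁ − ε_max)(1 − ‖𝓔‖₁)^{-1} > 0 and |1 − ‖Ψ̃^i‖^{-1}| ≤ (‖𝓔‖₁ + ε_max)(1 − 2‖𝓔‖₁ − ε_max)^{-1}. -/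
open scoped InnerProductSpace
open scoped Matrix

lemma aux_arith (E m t : ℝ) (hE0 : 0 ≤ E) (hm0 : 0 ≤ m)
    (hsmall : 2*E + m < 1) (ht0 : 0 ≤ t)
    (hlow : 1 - m - E * (E / (1 - E)) ≤ t^2) (hhigh : t^2 ≤ 1 + m) :
    (1 - 2*E - m) * (1 - E)⁻¹ ≤ t ∧ |1 - t⁻¹| ≤ (E + m) * (1 - 2*E - m)⁻¹ := by
  have h1E : (0:ℝ) < 1 - E := by linarith
  have hnum : (0:ℝ) < 1 - 2*E - m := by linarith
  have hg : (1-2*E-m)^2 ≤ (1 - m - E*(E/(1-E))) * (1-E)^2 := by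
    have hED : E*(E/(1-E))*(1-E) = E^2 := by field_simp
    nlinarith [mul_nonneg hE0 hnum.le, mul_nonneg hm0 hnum.le,
      mul_nonneg (mul_nonneg hE0 hE0) hE0,
      mul_nonneg (mul_nonneg hE0 hm0) (by linarith : (0:ℝ) ≤ 2 - E)]
  have key : (1-2*E-m)^2 ≤ (t*(1-E))^2 := by
    calc (1-2*E-m)^2 ≤ (1 - m - E*(E/(1-E))) * (1-E)^2 := hg
    _ ≤ t^2 * (1-E)^2 := by nlinarith [sq_nonneg (1-E)]
    _ = (t*(1-E))^2 := by ring
  have hLt : (1 - 2*E - m) * (1 - E)⁻¹ ≤ t := by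
    rw [← div_eq_mul_inv, div_le_iff₀ h1E]
    nlinarith [mul_nonneg ht0 h1E.le]
  have hL0 : 0 < (1 - 2*E - m) * (1 - E)⁻¹ := mul_pos hnum (inv_pos.2 h1E)
  have htpos : 0 < t := lt_of_lt_of_le hL0 hLt
  refine ⟨hLt, abs_le.mpr ⟨?_, ?_⟩⟩
  · have h1 : t⁻¹ ≤ ((1 - 2*E - m) * (1 - E)⁻¹)⁻¹ := inv_anti₀ hL0 hLt
    have h2 : ((1 - 2*E - m) * (1 - E)⁻¹)⁻¹ = 1 + (E+m) * (1-2*E-m)⁻¹ := by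
      rw [mul_inv, inv_inv]
      field_simp
      ring
    rw [h2] at h1
    linarith
  · have hub : t ≤ 1 + m/2 := by nlinarith
    have h1 : (1 + m/2)⁻¹ ≤ t⁻¹ := inv_anti₀ htpos hub
    have hx : (1 + m/2)⁻¹ * (1 + m/2) = 1 := inv_mul_cancel₀ (by linarith)
    have hxp : (0:ℝ) < (1 + m/2)⁻¹ := inv_pos.2 (by linarith)
    have hq : 1 - (1 + m/2)⁻¹ ≤ m := by nlinarith
    have h3 : m ≤ (E+m) * (1-2*E-m)⁻¹ := by
      have hinv1 : 1 ≤ (1-2*E-m)⁻¹ := by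
        rw [le_inv_comm₀ one_pos hnum]; linarith
      nlinarith [mul_le_mul_of_nonneg_left hinv1 (by linarith : (0:ℝ) ≤ E + m)]
    linarith

set_option maxHeartbeats 1000000 in
theorem stmt6 {Z : Type*} [NormedAddCommGroup Z] [InnerProductSpace ℂ Z] [CompleteSpace Z]
    {M : ℕ} (hM : 0 < M) (Ψ : Fin M → Z) (hΨ : LinearIndependent ℂ Ψ)
    (ε : Matrix (Fin M) (Fin M) ℂ)
    (hε : ∀ i j, (⟪Ψ i, Ψ j⟫_ℂ) = (if i = j then 1 else 0) + ε i j)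
    (εmax : ℝ) (hεmax : εmax = ⨆ i, ‖ε i i‖)
    (hsmall : 2 * matNorm1 ε + εmax < 1) :
    0 < (1 - 2 * matNorm1 ε - εmax) * (1 - matNorm1 ε)⁻¹ ∧
    ∀ i : Fin M,
      (1 - 2 * matNorm1 ε - εmax) * (1 - matNorm1 ε)⁻¹ ≤ ‖tildePsi Ψ i‖ ∧
      |1 - ‖tildePsi Ψ i‖⁻¹| ≤ (matNorm1 ε + εmax) * (1 - 2 * matNorm1 ε - εmax)⁻¹ := by
  have hne : Nonempty (Fin M) := ⟨⟨0, hM⟩⟩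
  set E := matNorm1 ε with hEdef
  -- column sums bounded by E
  have hcol : ∀ j, ∑ k, ‖ε k j‖ ≤ E := by
    intro j
    rw [hEdef]
    unfold matNorm1
    exact le_ciSup (f := fun j => ∑ k, ‖ε k j‖) (Set.Finite.bddAbove (Set.finite_range _)) j
  have hE0 : 0 ≤ E :=
    le_trans (Finset.sum_nonneg fun _ _ => norm_nonneg _) (hcol ⟨0, hM⟩)
  have hdiag : ∀ k, ‖ε k k‖ ≤ εmax := by
    intro k
    rw [hεmax]
    exact le_ciSup (f := fun i => ‖ε i i‖) (Set.Finite.bddAbove (Set.finite_range _)) k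
  have hm0 : 0 ≤ εmax := le_trans (norm_nonneg _) (hdiag ⟨0, hM⟩)
  have hentry : ∀ p q, ‖ε p q‖ ≤ E := by
    intro p q
    refine le_trans ?_ (hcol q)
    exact Finset.single_le_sum (fun k _ => norm_nonneg (ε k q)) (Finset.mem_univ p)
  have h1E : (0:ℝ) < 1 - E := by linarith
  have hnum : (0:ℝ) < 1 - 2*E - εmax := by linarith
  -- Hermitian symmetry of ε
  have hherm : ∀ p q, ε p q = starRingEnd ℂ (ε q p) := by
    intro p q
    have h1 := hε p q
    have h2 := hε q p
    have h3 : starRingEnd ℂ ⟪Ψ q, Ψ p⟫_ℂ = ⟪Ψ p, Ψ q⟫_ℂ := inner_conj_symm _ _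
    rw [h1, h2, map_add] at h3
    have h4 : starRingEnd ℂ (if q = p then (1:ℂ) else 0) = (if p = q then (1:ℂ) else 0) := by
      by_cases h : p = q <;> simp [h, eq_comm]
    rw [h4] at h3
    exact (add_left_cancel h3).symm
  refine ⟨mul_pos hnum (inv_pos.2 h1E), fun i => ?_⟩
  -- setup
  set cst : Fin i.val → Fin M := Fin.castLE i.isLt.le with hcst
  have hcstinj : Function.Injective cst := Fin.castLE_injective _
  set f : Fin i.val → Z := fun j => Ψ (cst j) with hf
  set A := gram Ψ i with hAdef
  set b : Fin i.val → ℂ := fun k => ⟪f k, Ψ i⟫_ℂ with hb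
  set c : Fin i.val → ℂ := A⁻¹.mulVec b with hc
  set v := ∑ j, c j • f j with hv
  have hAentry : ∀ j k, A j k = (if j = k then 1 else 0) + ε (cst j) (cst k) := by
    intro j k
    show ⟪Ψ (cst j), Ψ (cst k)⟫_ℂ = _
    rw [hε]
    congr 1
    simp [hcstinj.eq_iff]
  have hbk : ∀ k, b k = ε (cst k) i := by
    intro k
    have hki : cst k ≠ i := by
      intro h
      have := congrArg Fin.val h
      simp [hcst] at this
      omega
    show ⟪Ψ (cst k), Ψ i⟫_ℂ = _
    rw [hε, if_neg hki, zero_add]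
  -- sum of |b| bounded by E
  have hsubsum : ∀ (g : Fin M → ℝ), (∀ x, 0 ≤ g x) →
      ∑ k : Fin i.val, g (cst k) ≤ ∑ x, g x := by
    intro g hg
    have h1 : ∑ k : Fin i.val, g (cst k) = ∑ x ∈ Finset.univ.image cst, g x :=
      (Finset.sum_image (fun x _ y _ h => hcstinj h)).symm
    rw [h1]
    exact Finset.sum_le_sum_of_subset_of_nonneg (Finset.subset_univ _)
      (fun x _ _ => hg x)
  have hsb : ∑ k, ‖b k‖ ≤ E := by
    calc ∑ k, ‖b k‖ = ∑ k : Fin i.val, ‖ε (cst k) i‖ := by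
          exact Finset.sum_congr rfl fun k _ => by rw [hbk]
    _ ≤ ∑ x, ‖ε x i‖ := hsubsum (fun x => ‖ε x i‖) (fun x => norm_nonneg _)
    _ ≤ E := hcol i
  -- row sums of the restricted ε bounded by E
  have hrow : ∀ j : Fin i.val, ∑ k, ‖ε (cst j) (cst k)‖ ≤ E := by
    intro j
    calc ∑ k, ‖ε (cst j) (cst k)‖ = ∑ k : Fin i.val, ‖ε (cst k) (cst j)‖ := by
          refine Finset.sum_congr rfl fun k _ => ?_
          rw [hherm (cst j) (cst k)]
          exact RCLike.norm_conj _
    _ ≤ ∑ x, ‖ε x (cst j)‖ := hsubsum (fun x => ‖ε x (cst j)‖) (fun x => norm_nonneg _)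
    _ ≤ E := hcol (cst j)
  -- Gram matrix invertible
  have hli : LinearIndependent ℂ f := hΨ.comp cst hcstinj
  have hmv : ∀ x : Fin i.val → ℂ, ∀ j, (A *ᵥ x) j = ⟪f j, (∑ k, x k • f k)⟫_ℂ := by
    intro x j
    rw [inner_sum]
    simp only [inner_smul_right]
    show ∑ k, A j k * x k = _
    refine Finset.sum_congr rfl fun k _ => ?_
    rw [mul_comm]
    rfl
  have hunit : IsUnit A := by
    rw [← Matrix.mulVec_injective_iff_isUnit]
    intro x y hxy
    have hdiff : A *ᵥ (x - y) = 0 := by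
      rw [Matrix.mulVec_sub, hxy, sub_self]
    have hw : (∑ k, (x - y) k • f k) = 0 := by
      rw [← inner_self_eq_zero (𝕜 := ℂ), sum_inner]
      have : ∀ j, ⟪(x - y) j • f j, (∑ k, (x - y) k • f k)⟫_ℂ
          = starRingEnd ℂ ((x - y) j) * (A *ᵥ (x - y)) j := by
        intro j
        rw [inner_smul_left, hmv]
      rw [Finset.sum_congr rfl fun j _ => this j]
      simp [hdiff]
    have hz := Fintype.linearIndependent_iff.mp hli _ hw
    funext j
    have := hz j
    simpa [sub_eq_zero] using this
  have hAc : A *ᵥ c = b := by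
    rw [hc, Matrix.mulVec_mulVec, Matrix.mul_nonsing_inv _
      ((Matrix.isUnit_iff_isUnit_det A).mp hunit), Matrix.one_mulVec]
  -- tildePsi = Ψ i - v
  have htp : tildePsi Ψ i = Ψ i - v := by
    unfold tildePsi
    congr 1
    refine Finset.sum_congr rfl fun j _ => ?_
    rw [← Finset.sum_smul]
    congr 1
  -- inner products
  have hfv : ∀ l, ⟪f l, v⟫_ℂ = b l := by
    intro l
    rw [hv, ← hmv, hAc]
  have hvPsi : ⟪v, Ψ i⟫_ℂ = ∑ j, starRingEnd ℂ (c j) * b j := by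
    rw [hv, sum_inner]
    exact Finset.sum_congr rfl fun j _ => by rw [inner_smul_left]
  have hvv : ⟪v, v⟫_ℂ = ⟪v, Ψ i⟫_ℂ := by
    rw [hvPsi]
    nth_rewrite 1 [hv]
    rw [sum_inner]
    refine Finset.sum_congr rfl fun j _ => ?_
    rw [inner_smul_left, hfv]
  -- norm identity
  have hvn : (‖v‖:ℝ)^2 = (⟪v, Ψ i⟫_ℂ).re := by
    rw [← hvv, inner_self_eq_norm_sq_to_K]
    norm_cast
  have hrn : ‖Ψ i - v‖^2 = ‖Ψ i‖^2 - ‖v‖^2 := by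
    have hexp : ⟪Ψ i - v, Ψ i - v⟫_ℂ = ⟪Ψ i, Ψ i⟫_ℂ - ⟪Ψ i, v⟫_ℂ := by
      rw [inner_sub_left, inner_sub_right, inner_sub_right, hvv]
      ring
    have := congrArg Complex.re hexp
    rw [inner_self_eq_norm_sq_to_K, inner_self_eq_norm_sq_to_K] at this
    simp only [Complex.sub_re] at this
    have hre : (⟪Ψ i, v⟫_ℂ).re = (⟪v, Ψ i⟫_ℂ).re := by
      conv_lhs => rw [← inner_conj_symm (Ψ i) v]
      exact Complex.conj_re _
    rw [hre, ← hvn] at this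
    exact_mod_cast this
  -- bound on c
  have hcbd : ∀ j, ‖c j‖ ≤ E / (1 - E) := by
    rcases isEmpty_or_nonempty (Fin i.val) with he | he
    · intro j; exact absurd (he.false j) (by simp)
    · obtain ⟨j₀, hj₀⟩ := Finite.exists_max (fun j => ‖c j‖)
      have hrec : c j₀ = b j₀ - ∑ k, ε (cst j₀) (cst k) * c k := by
        have h1 : (A *ᵥ c) j₀ = b j₀ := by rw [hAc]
        have h2 : (A *ᵥ c) j₀ = ∑ k, ((if j₀ = k then (1:ℂ) else 0) + ε (cst j₀) (cst k)) * c k := by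
          show ∑ k, A j₀ k * c k = _
          refine Finset.sum_congr rfl fun k _ => by rw [hAentry]
        rw [h2] at h1
        simp only [add_mul, Finset.sum_add_distrib, ite_mul, one_mul, zero_mul,
          Finset.sum_ite_eq, Finset.mem_univ, if_true] at h1
        linear_combination h1
      have hle : ‖c j₀‖ ≤ E + E * ‖c j₀‖ := by
        calc ‖c j₀‖ = ‖b j₀ - ∑ k, ε (cst j₀) (cst k) * c k‖ := by rw [hrec]
        _ ≤ ‖b j₀‖ + ‖∑ k, ε (cst j₀) (cst k) * c k‖ := norm_sub_le _ _
        _ ≤ ‖b j₀‖ + ∑ k, ‖ε (cst j₀) (cst k) * c k‖ :=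
            add_le_add (le_refl _) (norm_sum_le _ _)
        _ ≤ E + ∑ k, ‖ε (cst j₀) (cst k)‖ * ‖c j₀‖ := by
            refine add_le_add ?_ (Finset.sum_le_sum fun k _ => ?_)
            · rw [hbk]; exact hentry _ _
            · rw [norm_mul]
              exact mul_le_mul_of_nonneg_left (hj₀ k) (norm_nonneg _)
        _ = E + (∑ k, ‖ε (cst j₀) (cst k)‖) * ‖c j₀‖ := by rw [Finset.sum_mul]
        _ ≤ E + E * ‖c j₀‖ := by
            refine add_le_add (le_refl _) (mul_le_mul_of_nonneg_right (hrow j₀) (norm_nonneg _))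
      intro j
      refine le_trans (hj₀ j) ?_
      rw [le_div_iff₀ h1E]
      nlinarith [hle]
  -- bound ‖v‖²
  have hvbd : ‖v‖^2 ≤ E * (E / (1 - E)) := by
    rw [hvn]
    calc (⟪v, Ψ i⟫_ℂ).re ≤ ‖⟪v, Ψ i⟫_ℂ‖ := Complex.re_le_norm _
    _ ≤ ∑ j, ‖starRingEnd ℂ (c j) * b j‖ := by
        rw [hvPsi]; exact norm_sum_le _ _
    _ = ∑ j, ‖c j‖ * ‖b j‖ := by
        refine Finset.sum_congr rfl fun j _ => ?_
        rw [norm_mul, RCLike.norm_conj]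
    _ ≤ ∑ j, (E / (1-E)) * ‖b j‖ := by
        refine Finset.sum_le_sum fun j _ => mul_le_mul_of_nonneg_right (hcbd j) (norm_nonneg _)
    _ = (E / (1-E)) * ∑ j, ‖b j‖ := by rw [Finset.mul_sum]
    _ ≤ (E / (1-E)) * E := by
        refine mul_le_mul_of_nonneg_left hsb (by positivity)
    _ = E * (E / (1-E)) := mul_comm _ _
  -- ‖Ψ i‖² bounds
  have hpsin : |‖Ψ i‖^2 - 1| ≤ εmax := by
    have h1 : ⟪Ψ i, Ψ i⟫_ℂ = 1 + ε i i := by rw [hε]; simp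
    have h2 : (‖Ψ i‖:ℝ)^2 = 1 + (ε i i).re := by
      have := congrArg Complex.re h1
      rw [inner_self_eq_norm_sq_to_K] at this
      simp only [Complex.add_re, Complex.one_re] at this
      exact_mod_cast this
    rw [h2]
    simp only [add_sub_cancel_left]
    exact le_trans (Complex.abs_re_le_norm _) (hdiag i)
  have habs := abs_le.mp hpsin
  -- final bounds
  have hvnn : 0 ≤ ‖v‖^2 := sq_nonneg _
  have hlow : 1 - εmax - E * (E / (1 - E)) ≤ ‖Ψ i - v‖^2 := by
    rw [hrn]; linarith
  have hhigh : ‖Ψ i - v‖^2 ≤ 1 + εmax := by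
    rw [hrn]; linarith
  rw [htp]
  exact aux_arith E εmax _ hE0 hm0 hsmall (norm_nonneg _) hlow hhigh
end
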